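/- If a phase automaton A simulates a transition system TS, then A is a phase invariant of TS: for every finite trace σ₀,…,σₙ of TS and every valuation v, there exists a phase trace q₀,…,qₙ with q₀ = ι, σᵢ ∈ φ qᵢ v for all i, and (σᵢ,σᵢ₊₁) ∈ δ qᵢ qᵢ₊₁ v for all i < n. -/
import Mathlib


/-- If a phase automaton simulates TS, then it is a phase invariant of TS. -/
theorem simulation_implies_phase_invariant
    {S V Q : Type*}
    (Init : Set S) (TR : Set (S × S)) (ι : Q)
    (δ : Q → Q → V → Set (S × S)) (φ : Q → V → Set S)
    (hsim : ∀ v : V, ∃ H : Set (S × Q),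
      (∀ σ q, (σ, q) ∈ H → σ ∈ φ q v) ∧
      (∀ σ₀ ∈ Init, (σ₀, ι) ∈ H) ∧
      (∀ σ σ' q, (σ, σ') ∈ TR → (σ, q) ∈ H →
        ∃ q', (σ', q') ∈ H ∧ (σ, σ') ∈ δ q q' v)) :
    ∀ (n : ℕ) (σ : ℕ → S), σ 0 ∈ Init → (∀ i < n, (σ i, σ (i + 1)) ∈ TR) →
      ∀ v : V, ∃ qs : ℕ → Q, qs 0 = ι ∧
        (∀ i ≤ n, σ i ∈ φ (qs i) v) ∧
        (∀ i < n, (σ i, σ (i + 1)) ∈ δ (qs i) (qs (i + 1)) v) := by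
  intro n σ hinit htr v
  obtain ⟨H, hφ, hι, hstep⟩ := hsim v
  suffices h : ∃ qs : ℕ → Q, qs 0 = ι ∧
      (∀ i ≤ n, (σ i, qs i) ∈ H) ∧
      (∀ i < n, (σ i, σ (i + 1)) ∈ δ (qs i) (qs (i + 1)) v) by
    obtain ⟨qs, h0, h1, h2⟩ := h
    exact ⟨qs, h0, fun i hi => hφ _ _ (h1 i hi), h2⟩
  induction n with
  | zero =>
    exact ⟨fun _ => ι, rfl, fun i hi => by
      interval_cases i; exact hι _ hinit, fun i hi => absurd hi (Nat.not_lt_zero i)⟩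
  | succ n ih =>
    obtain ⟨qs, h0, h1, h2⟩ := ih (fun i hi => htr i (hi.trans (Nat.lt_succ_self n)))
    obtain ⟨q', hq'H, hq'δ⟩ := hstep (σ n) (σ (n + 1)) (qs n)
      (htr n (Nat.lt_succ_self n)) (h1 n le_rfl)
    refine ⟨Function.update qs (n + 1) q', ?_, ?_, ?_⟩
    · rw [Function.update_of_ne (Nat.succ_ne_zero n).symm]; exact h0
    · intro i hi
      rcases Nat.lt_succ_iff_lt_or_eq.mp (Nat.lt_succ_of_le hi) with h | h
      · rw [Function.update_of_ne (Nat.ne_of_lt h)]; exact h1 i (Nat.lt_succ_iff.mp h)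
      · subst h; rw [Function.update_self]; exact hq'H
    · intro i hi
      rcases Nat.lt_succ_iff_lt_or_eq.mp hi with h | h
      · rw [Function.update_of_ne (Nat.ne_of_lt (h.trans (Nat.lt_succ_self n))),
          Function.update_of_ne (Nat.ne_of_lt (Nat.succ_lt_succ h))]
        exact h2 i h
      · subst h
        rw [Function.update_of_ne (Nat.ne_of_lt (Nat.lt_succ_self i)),
          Function.update_self]
        exact hq'δ
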